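/- Let m, x, s ∈ ℝ with 0 ≤ m ≤ x ≤ 1 and 0 ≤ s ≤ x. Then (2x − s)/(2(1 + x − s)) + m²/(1+m) ≤ x. -/
import Mathlib


/-- for `0 ≤ m ≤ x ≤ 1` and `0 ≤ s ≤ x`,
`(2x − s)/(2(1 + x − s)) + m²/(1+m) ≤ x`. -/
theorem positive_edge_charging (m x s : ℝ) (hm0 : 0 ≤ m) (hmx : m ≤ x) (hx1 : x ≤ 1)
    (hs0 : 0 ≤ s) (hsx : s ≤ x) :
    (2 * x - s) / (2 * (1 + x - s)) + m ^ 2 / (1 + m) ≤ x := by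
  have h1 : (0:ℝ) < 2 * (1 + x - s) := by linarith
  have h2 : (0:ℝ) < 1 + m := by linarith
  rw [div_add_div _ _ (ne_of_gt h1) (ne_of_gt h2), div_le_iff₀ (by positivity)]
  nlinarith [sq_nonneg (x - m), sq_nonneg (x - s), mul_nonneg hs0 hm0, sq_nonneg (x*m - s),
    mul_nonneg (mul_nonneg hs0 hm0) hm0, sq_nonneg (1-x), mul_nonneg hs0 (sub_nonneg.2 hx1),
    mul_nonneg hm0 (sub_nonneg.2 hx1), mul_nonneg (mul_nonneg hm0 hm0) (sub_nonneg.2 hx1),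
    mul_nonneg (sub_nonneg.2 hmx) (sub_nonneg.2 hsx)]
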